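/- arXiv:1109.4898 — 2 statements merged into one kernel-verified Lean document; each statement's English description precedes it below -/
import Mathlib

section
/- Let 𝕂 be ℝ or ℂ, let 1 ≤ p, r, q_1, …, q_n < ∞, and let E_1, …, E_n, F be Banach spaces over 𝕂. If 1/p > 1/q_i + 1/r for some i ∈ {1,…,n}, then the only continuous n-linear operator T : E_1 × ⋯ × E_n → F that is multiple (p;q_1,…,q_n;r)-summing is the zero operator. -/
open scoped BigOperators
noncomputable section

/-- The weak `ℓ^q` norm of a finite family in a normed space:
`sup_{‖φ‖ ≤ 1} (∑_j |φ(x_j)|^q)^{1/q}`. -/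
def weakLpNorm (𝕂 : Type*) [RCLike 𝕂] {E : Type*} [NormedAddCommGroup E] [NormedSpace 𝕂 E]
    {J : Type*} [Fintype J] (q : ℝ) (x : J → E) : ℝ :=
  ⨆ φ : {φ : E →L[𝕂] 𝕂 // ‖φ‖ ≤ 1}, (∑ j, ‖φ.1 (x j)‖ ^ q) ^ (1 / q)

/-- `T` is multiple `(p;q₁,…,qₙ;r)`-summing. -/
def MultipleSummingR (𝕂 : Type*) [RCLike 𝕂] {n : ℕ} {E : Fin n → Type*}
    [∀ i, NormedAddCommGroup (E i)] [∀ i, NormedSpace 𝕂 (E i)]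
    {F : Type*} [NormedAddCommGroup F] [NormedSpace 𝕂 F]
    (p r : ℝ) (q : Fin n → ℝ) (T : ((i : Fin n) → E i) → F) : Prop :=
  ∃ C : ℝ, 0 ≤ C ∧ ∀ (m : ℕ) (x : (i : Fin n) → Fin m → E i)
      (φ : (Fin n → Fin m) → (F →L[𝕂] 𝕂)),
      (∑ j : Fin n → Fin m, ‖φ j (T (fun i => x i (j i)))‖ ^ p) ^ (1 / p) ≤
        C * weakLpNorm 𝕂 r φ * ∏ i, weakLpNorm 𝕂 (q i) (x i)

lemma weakLpNorm_nonneg (𝕂 : Type*) [RCLike 𝕂] {E : Type*} [NormedAddCommGroup E]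
    [NormedSpace 𝕂 E] {J : Type*} [Fintype J] (q : ℝ) (x : J → E) :
    0 ≤ weakLpNorm 𝕂 q x :=
  Real.iSup_nonneg fun _ => Real.rpow_nonneg
    (Finset.sum_nonneg fun _ _ => Real.rpow_nonneg (norm_nonneg _) _) _

lemma weakLpNorm_le_rpow_sum {𝕂 : Type*} [RCLike 𝕂] {E : Type*} [NormedAddCommGroup E]
    [NormedSpace 𝕂 E] {J : Type*} [Fintype J] {q : ℝ} (hq : 0 < q) (x : J → E) :
    weakLpNorm 𝕂 q x ≤ (∑ j, ‖x j‖ ^ q) ^ (1 / q) := by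
  haveI : Nonempty {φ : E →L[𝕂] 𝕂 // ‖φ‖ ≤ 1} := ⟨⟨0, by simp⟩⟩
  apply ciSup_le
  intro φ
  apply Real.rpow_le_rpow (Finset.sum_nonneg fun _ _ => Real.rpow_nonneg (norm_nonneg _) _)
    _ (by positivity)
  apply Finset.sum_le_sum
  intro j _
  apply Real.rpow_le_rpow (norm_nonneg _) _ hq.le
  calc ‖φ.1 (x j)‖ ≤ ‖φ.1‖ * ‖x j‖ := φ.1.le_opNorm _
    _ ≤ 1 * ‖x j‖ := by gcongr; exact φ.2
    _ = ‖x j‖ := one_mul _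


/-- if `1/p > 1/qᵢ + 1/r` for some `i`, then the only multiple
`(p;q₁,…,qₙ;r)`-summing operator is `0`. -/
theorem multipleSummingR_eq_zero_of_exponents
    {𝕂 : Type*} [RCLike 𝕂] {n : ℕ} (hn : 1 ≤ n)
    (p r : ℝ) (q : Fin n → ℝ) (hp : 1 ≤ p) (hr : 1 ≤ r) (hq : ∀ i, 1 ≤ q i)
    (E : Fin n → Type*) [∀ i, NormedAddCommGroup (E i)] [∀ i, NormedSpace 𝕂 (E i)]
    [∀ i, CompleteSpace (E i)]
    (F : Type*) [NormedAddCommGroup F] [NormedSpace 𝕂 F] [CompleteSpace F]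
    (hex : ∃ i : Fin n, 1 / p > 1 / q i + 1 / r)
    (T : ContinuousMultilinearMap 𝕂 E F)
    (hT : MultipleSummingR 𝕂 p r q (⇑T)) :
    T = 0 := by
  classical
  obtain ⟨i, hi⟩ := hex
  obtain ⟨C, hC, hbound⟩ := hT
  ext a
  show T a = 0
  by_contra hTa
  obtain ⟨ψ, hψ1, hψa⟩ := exists_dual_vector 𝕂 (T a) (norm_ne_zero_iff.mpr hTa)
  have hp0 : (0:ℝ) < p := lt_of_lt_of_le one_pos hp
  have hr0 : (0:ℝ) < r := lt_of_lt_of_le one_pos hr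
  have hqi0 : (0:ℝ) < q i := lt_of_lt_of_le one_pos (hq i)
  set c := ‖T a‖ with hc
  have hc0 : 0 < c := norm_pos_iff.mpr hTa
  set B := ∏ i', ‖a i'‖ with hB
  have hB0 : 0 ≤ B := Finset.prod_nonneg fun _ _ => norm_nonneg _
  have key : ∀ m : ℕ, c ≤ C * B * ((m:ℝ)+1) ^ (1/r + 1/(q i) - 1/p) := by
    intro m
    set M : ℝ := (m:ℝ)+1 with hM
    have hM0 : (0:ℝ) < M := by positivity
    set P : (Fin n → Fin (m+1)) → Prop := fun j => ∀ i', i' ≠ i → j i' = 0 with hP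
    set x : (i' : Fin n) → Fin (m+1) → E i' :=
      fun i' j => if i' = i then a i' else if j = 0 then a i' else 0 with hx
    set φ : (Fin n → Fin (m+1)) → (F →L[𝕂] 𝕂) :=
      fun j => if P j then ψ else 0 with hφ
    have hcard : (Finset.univ.filter P).card = m+1 := by
      have hbij : (Finset.univ.filter P).card = (Finset.univ : Finset (Fin (m+1))).card := by
        apply Finset.card_nbij' (fun j => j i)
          (fun k => fun i' => if i' = i then k else 0)
        · intro j _; exact Finset.mem_univ _
        · intro k _
          simp only [Finset.mem_coe, Finset.mem_filter, Finset.mem_univ, true_and, hP]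
          intro i' hi'
          simp [hi']
        · intro j hj
          simp only [Finset.mem_coe, Finset.mem_filter, Finset.mem_univ, true_and, hP] at hj
          funext i'
          by_cases h : i' = i
          · subst h; simp
          · simp [h, hj i' h]
        · intro k _; simp
      rw [hbij, Finset.card_univ, Fintype.card_fin]
    have harg : ∀ j, P j → (fun i' => x i' (j i')) = a := by
      intro j hj
      funext i'
      by_cases h : i' = i
      · simp [hx, h]
      · simp [hx, h, hj i' h]
    have hterm : ∀ j, ‖φ j (T (fun i' => x i' (j i')))‖ ^ p
        = if P j then c ^ p else 0 := by
      intro j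
      by_cases hj : P j
      · have hφj : φ j = ψ := by rw [hφ]; exact if_pos hj
        rw [hφj, harg j hj, hψa, if_pos hj]
        rw [RCLike.norm_ofReal, abs_of_nonneg (norm_nonneg _)]
      · have hφj : φ j = 0 := by rw [hφ]; exact if_neg hj
        rw [hφj, if_neg hj]
        simp [Real.zero_rpow hp0.ne']
    have hsum : ∑ j, ‖φ j (T (fun i' => x i' (j i')))‖ ^ p = M * c ^ p := by
      rw [Finset.sum_congr rfl (fun j _ => hterm j)]
      rw [Finset.sum_ite, Finset.sum_const, Finset.sum_const_zero, add_zero, hcard,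
        nsmul_eq_mul, hM]
      push_cast
      ring
    have hwφ : weakLpNorm 𝕂 r φ ≤ M ^ (1/r) := by
      refine (weakLpNorm_le_rpow_sum hr0 φ).trans (le_of_eq ?_)
      congr 1
      calc ∑ j, ‖φ j‖ ^ r = ∑ j : Fin n → Fin (m+1), (if P j then (1:ℝ) else 0) := by
            apply Finset.sum_congr rfl
            intro j _
            by_cases hj : P j
            · have hφj : φ j = ψ := by rw [hφ]; exact if_pos hj
              rw [hφj, hψ1, if_pos hj, Real.one_rpow]
            · have hφj : φ j = 0 := by rw [hφ]; exact if_neg hj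
              rw [hφj, if_neg hj, norm_zero, Real.zero_rpow hr0.ne']
        _ = M := by
            rw [Finset.sum_ite, Finset.sum_const, Finset.sum_const_zero, add_zero, hcard,
              nsmul_eq_mul, hM]
            push_cast
            ring
    have hwxi : weakLpNorm 𝕂 (q i) (x i) ≤ M ^ (1/(q i)) * ‖a i‖ := by
      refine (weakLpNorm_le_rpow_sum hqi0 (x i)).trans ?_
      have hsx : ∑ j, ‖x i j‖ ^ (q i) = M * ‖a i‖ ^ (q i) := by
        have : ∀ j : Fin (m+1), ‖x i j‖ ^ (q i) = ‖a i‖ ^ (q i) := by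
          intro j; simp [hx]
        rw [Finset.sum_congr rfl (fun j _ => this j), Finset.sum_const, Finset.card_univ,
          Fintype.card_fin, nsmul_eq_mul, hM]
        push_cast
        ring
      rw [hsx, Real.mul_rpow hM0.le (Real.rpow_nonneg (norm_nonneg _) _), one_div,
        Real.rpow_rpow_inv (norm_nonneg _) hqi0.ne']
    have hwx' : ∀ i', i' ≠ i → weakLpNorm 𝕂 (q i') (x i') ≤ ‖a i'‖ := by
      intro i' h
      have hq0' : (0:ℝ) < q i' := lt_of_lt_of_le one_pos (hq i')
      refine (weakLpNorm_le_rpow_sum hq0' (x i')).trans ?_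
      have hsx : ∑ j, ‖x i' j‖ ^ (q i') = ‖a i'‖ ^ (q i') := by
        have : ∀ j : Fin (m+1), ‖x i' j‖ ^ (q i')
            = if j = 0 then ‖a i'‖ ^ (q i') else 0 := by
          intro j
          by_cases hj : j = 0 <;> simp [hx, h, hj, Real.zero_rpow hq0'.ne']
        rw [Finset.sum_congr rfl (fun j _ => this j), Finset.sum_ite_eq' Finset.univ 0]
        simp
      rw [hsx, one_div, Real.rpow_rpow_inv (norm_nonneg _) hq0'.ne']
    have hwx : ∏ i', weakLpNorm 𝕂 (q i') (x i') ≤ M ^ (1/(q i)) * B := by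
      have hrhs : M ^ (1/(q i)) * B
          = ∏ i', (if i' = i then M ^ (1/(q i')) else 1) * ‖a i'‖ := by
        rw [Finset.prod_mul_distrib, Finset.prod_ite_eq' Finset.univ i
          (fun i' => M ^ (1/(q i')))]
        simp [hB]
      rw [hrhs]
      apply Finset.prod_le_prod
      · intro i' _; exact weakLpNorm_nonneg 𝕂 _ _
      · intro i' _
        by_cases h : i' = i
        · subst h; simpa using hwxi
        · simpa [h] using hwx' i' h
    have main := hbound (m+1) x φ
    rw [hsum, Real.mul_rpow hM0.le (Real.rpow_nonneg hc0.le _), one_div p,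
      Real.rpow_rpow_inv hc0.le hp0.ne'] at main
    have h2 : M ^ p⁻¹ * c ≤ C * M ^ (1/r) * (M ^ (1/(q i)) * B) := by
      refine main.trans ?_
      have w1 := weakLpNorm_nonneg 𝕂 r φ
      have w2 : 0 ≤ ∏ i', weakLpNorm 𝕂 (q i') (x i') :=
        Finset.prod_nonneg fun i' _ => weakLpNorm_nonneg 𝕂 _ _
      apply mul_le_mul (mul_le_mul le_rfl hwφ w1 hC) hwx w2 (by positivity)
    have hMe : M ^ (1/r) * M ^ (1/(q i)) = M ^ (1/r + 1/(q i) - 1/p) * M ^ (1/p) := by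
      rw [← Real.rpow_add hM0, ← Real.rpow_add hM0]
      congr 1
      ring
    have hfin : c * M ^ (1/p) ≤ (C * B * M ^ (1/r + 1/(q i) - 1/p)) * M ^ (1/p) := by
      calc c * M ^ (1/p) = M ^ p⁻¹ * c := by rw [one_div]; ring
        _ ≤ C * M ^ (1/r) * (M ^ (1/(q i)) * B) := h2
        _ = C * B * (M ^ (1/r) * M ^ (1/(q i))) := by ring
        _ = (C * B * M ^ (1/r + 1/(q i) - 1/p)) * M ^ (1/p) := by rw [hMe]; ring
    exact le_of_mul_le_mul_right hfin (Real.rpow_pos_of_pos hM0 _)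
  have hδ : (0:ℝ) < -(1/r + 1/(q i) - 1/p) := by
    simp only [gt_iff_lt] at hi
    linarith
  have htend : Filter.Tendsto (fun m : ℕ => C * B * ((m:ℝ)+1) ^ (1/r + 1/(q i) - 1/p))
      Filter.atTop (nhds 0) := by
    have h1 : Filter.Tendsto (fun m : ℕ => (m:ℝ)+1) Filter.atTop Filter.atTop :=
      Filter.tendsto_atTop_add_const_right _ 1 tendsto_natCast_atTop_atTop
    have h2 := (tendsto_rpow_neg_atTop hδ).comp h1
    simp only [Function.comp_def, neg_neg] at h2
    have h3 := h2.const_mul (C * B)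
    simpa using h3
  have hle : c ≤ 0 := ge_of_tendsto htend (Filter.Eventually.of_forall key)
  linarith
end
end

section
/- Let 𝕂 be ℝ or ℂ, let 0 < p_1, …, p_n ≤ q ≤ s < ∞, and let E_1, …, E_n, F be Banach spaces over 𝕂. A continuous n-linear operator A : E_1 × ⋯ × E_n → F is multiple (s,q;p_1,…,p_n)-mixing summing if and only if there exists a constant σ ≥ 0 such that (∑_{j_1,…,j_n=1}^m (∑_{j=1}^k |φ_j(A(x_{j_1}^{(1)},…,x_{j_n}^{(n)}))|^s)^{q/s})^{1/q} ≤ σ · ∏_{l=1}^n ‖(x_i^{(l)})_{i=1}^m‖_{w,p_l} · (∑_{j=1}^k ‖φ_j‖^s)^{1/s} for all k, m ∈ ℕ, all x_i^{(l)} ∈ E_l (1 ≤ i ≤ m, 1 ≤ l ≤ n) and all φ_1, …, φ_k ∈ F*. Moreover, ‖A‖_{mx(s,q;p_1,…,p_n)} equals the infimum of all constants σ satisfying this inequality. -/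
open scoped BigOperators
noncomputable section

/-- The mixed `(s,q)`-norm of a finite family `z` in `F`:
`inf ‖(τ_j)‖_{ℓ^ρ} ‖(y_j)‖_{w,s}` over factorizations `z_j = τ_j • y_j`, where
`1/ρ = 1/q - 1/s` (so `ρ = ∞`, i.e. the sup norm, when `s = q`). -/
def mixedNorm (𝕂 : Type*) [RCLike 𝕂] {F : Type*} [NormedAddCommGroup F] [NormedSpace 𝕂 F]
    {J : Type*} [Fintype J] (s q : ℝ) (z : J → F) : ℝ :=
  sInf { c : ℝ | ∃ τ : J → 𝕂, ∃ y : J → F, (∀ j, z j = τ j • y j) ∧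
      c = (if s = q then ⨆ j, ‖τ j‖
           else (∑ j, ‖τ j‖ ^ (1 / q - 1 / s)⁻¹) ^ (1 / q - 1 / s)) * weakLpNorm 𝕂 s y }

section helpers

variable {𝕂 : Type*} [RCLike 𝕂] {F : Type*} [NormedAddCommGroup F] [NormedSpace 𝕂 F]
variable {J : Type*} [Fintype J]

lemma rpow_one_div_rpow {a t : ℝ} (ha : 0 ≤ a) (ht : t ≠ 0) : (a ^ (1 / t)) ^ t = a := by
  rw [← Real.rpow_mul ha, one_div, inv_mul_cancel₀ ht, Real.rpow_one]

lemma real_rpow_add_le {x y r : ℝ} (hx : 0 ≤ x) (hy : 0 ≤ y) (hr : 0 ≤ r) (hr1 : r ≤ 1) :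
    (x + y) ^ r ≤ x ^ r + y ^ r := by
  have h := NNReal.rpow_add_le_add_rpow x.toNNReal y.toNNReal hr hr1
  have h2 := NNReal.coe_le_coe.2 h
  push_cast at h2
  rwa [Real.coe_toNNReal x hx, Real.coe_toNNReal y hy] at h2

lemma weakLpNorm_nonneg_s7 (s : ℝ) (x : J → F) : 0 ≤ weakLpNorm 𝕂 s x :=
  Real.iSup_nonneg fun _ => Real.rpow_nonneg
    (Finset.sum_nonneg fun _ _ => Real.rpow_nonneg (norm_nonneg _) _) _

lemma bddAbove_weak {s : ℝ} (hs : 0 ≤ s) (x : J → F) :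
    BddAbove (Set.range fun φ : {φ : F →L[𝕂] 𝕂 // ‖φ‖ ≤ 1} =>
      (∑ j, ‖φ.1 (x j)‖ ^ s) ^ (1 / s)) := by
  refine ⟨(∑ j, ‖x j‖ ^ s) ^ (1 / s), ?_⟩
  rintro _ ⟨φ, rfl⟩
  refine Real.rpow_le_rpow (Finset.sum_nonneg fun _ _ => Real.rpow_nonneg (norm_nonneg _) _)
    (Finset.sum_le_sum fun j _ => Real.rpow_le_rpow (norm_nonneg _) ?_ hs)
    (one_div_nonneg.2 hs)
  exact (φ.1.le_opNorm (x j)).trans (mul_le_of_le_one_left (norm_nonneg _) φ.2)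

lemma le_weakLpNorm {s : ℝ} (hs : 0 ≤ s) (x : J → F) (φ : F →L[𝕂] 𝕂) (hφ : ‖φ‖ ≤ 1) :
    (∑ j, ‖φ (x j)‖ ^ s) ^ (1 / s) ≤ weakLpNorm 𝕂 s x :=
  le_ciSup (bddAbove_weak hs x) (⟨φ, hφ⟩ : {φ : F →L[𝕂] 𝕂 // ‖φ‖ ≤ 1})

lemma sum_rpow_le_weak {s : ℝ} (hs : 0 < s) (x : J → F) (φ : F →L[𝕂] 𝕂) (hφ : ‖φ‖ ≤ 1) :
    ∑ j, ‖φ (x j)‖ ^ s ≤ (weakLpNorm 𝕂 s x) ^ s := by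
  have h0 : (0:ℝ) ≤ ∑ j, ‖φ (x j)‖ ^ s :=
    Finset.sum_nonneg fun _ _ => Real.rpow_nonneg (norm_nonneg _) _
  have h := Real.rpow_le_rpow (Real.rpow_nonneg h0 _) (le_weakLpNorm hs.le x φ hφ) hs.le
  rwa [rpow_one_div_rpow h0 hs.ne'] at h

lemma sum_rpow_apply_le {s : ℝ} (hs : 0 < s) (x : J → F) (φ : F →L[𝕂] 𝕂) :
    ∑ j, ‖φ (x j)‖ ^ s ≤ ‖φ‖ ^ s * weakLpNorm 𝕂 s x ^ s := by
  rcases eq_or_ne φ 0 with rfl | hφ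
  · have : ∀ j ∈ Finset.univ, ‖(0 : F →L[𝕂] 𝕂) (x j)‖ ^ s = 0 := by
      intro j _; simp [Real.zero_rpow hs.ne']
    rw [Finset.sum_congr rfl this, Finset.sum_const, smul_zero]
    exact mul_nonneg (Real.rpow_nonneg (norm_nonneg _) _)
      (Real.rpow_nonneg (weakLpNorm_nonneg_s7 _ _) _)
  · have hn : 0 < ‖φ‖ := norm_pos_iff.2 hφ
    set ψ : F →L[𝕂] 𝕂 := ((‖φ‖⁻¹ : ℝ) : 𝕂) • φ with hψdef
    have hψn : ‖ψ‖ ≤ 1 := by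
      have hns : ‖ψ‖ = ‖((‖φ‖⁻¹ : ℝ) : 𝕂)‖ * ‖φ‖ := by rw [hψdef]; exact norm_smul ((‖φ‖⁻¹ : ℝ) : 𝕂) φ
      rw [hns, RCLike.norm_ofReal, abs_of_pos (inv_pos.2 hn), inv_mul_cancel₀ hn.ne']
    have h4 := sum_rpow_le_weak hs x ψ hψn
    have key : ∀ j, ‖φ (x j)‖ ^ s = ‖φ‖ ^ s * ‖ψ (x j)‖ ^ s := by
      intro j
      have h1 : ‖ψ (x j)‖ = ‖φ‖⁻¹ * ‖φ (x j)‖ := by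
        rw [hψdef, ContinuousLinearMap.smul_apply, norm_smul, RCLike.norm_ofReal,
          abs_of_pos (inv_pos.2 hn)]
      rw [h1, Real.mul_rpow (by positivity) (norm_nonneg _), ← mul_assoc,
        ← Real.mul_rpow hn.le (by positivity), mul_inv_cancel₀ hn.ne', Real.one_rpow, one_mul]
    calc ∑ j, ‖φ (x j)‖ ^ s = ‖φ‖ ^ s * ∑ j, ‖ψ (x j)‖ ^ s := by
          rw [Finset.mul_sum]; exact Finset.sum_congr rfl fun j _ => key j
      _ ≤ ‖φ‖ ^ s * weakLpNorm 𝕂 s x ^ s :=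
          mul_le_mul_of_nonneg_left h4 (Real.rpow_nonneg hn.le _)

end helpers

section keyupper

variable {𝕂 : Type*} [RCLike 𝕂] {F : Type*} [NormedAddCommGroup F] [NormedSpace 𝕂 F]
variable {J : Type*} [Fintype J]

lemma key_upper {s q : ℝ} (hq : 0 < q) (hqs : q ≤ s) (z y : J → F) (τ : J → 𝕂)
    (hzy : ∀ j, z j = τ j • y j) (k : ℕ) (φ : Fin k → F →L[𝕂] 𝕂) :
    (∑ j, (∑ i, ‖φ i (z j)‖ ^ s) ^ (q / s)) ^ (1 / q) ≤
      (if s = q then ⨆ j, ‖τ j‖ else (∑ j, ‖τ j‖ ^ (1 / q - 1 / s)⁻¹) ^ (1 / q - 1 / s)) *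
        weakLpNorm 𝕂 s y * (∑ i, ‖φ i‖ ^ s) ^ (1 / s) := by
  have hs : 0 < s := hq.trans_le hqs
  set W := weakLpNorm 𝕂 s y with hWdef
  have hW : 0 ≤ W := weakLpNorm_nonneg_s7 _ _
  set X := ∑ i, ‖φ i‖ ^ s with hXdef
  have hX0 : 0 ≤ X := Finset.sum_nonneg fun _ _ => Real.rpow_nonneg (norm_nonneg _) _
  have hinner : ∀ j, ∑ i, ‖φ i (z j)‖ ^ s = ‖τ j‖ ^ s * ∑ i, ‖φ i (y j)‖ ^ s := by
    intro j
    rw [Finset.mul_sum]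
    refine Finset.sum_congr rfl fun i _ => ?_
    rw [hzy j, map_smul, smul_eq_mul, norm_mul, Real.mul_rpow (norm_nonneg _) (norm_nonneg _)]
  have hSnn : ∀ j, (0:ℝ) ≤ ∑ i, ‖φ i (y j)‖ ^ s :=
    fun j => Finset.sum_nonneg fun _ _ => Real.rpow_nonneg (norm_nonneg _) _
  have hyb : ∑ j, ∑ i, ‖φ i (y j)‖ ^ s ≤ W ^ s * X := by
    rw [Finset.sum_comm]
    calc ∑ i, ∑ j, ‖φ i (y j)‖ ^ s ≤ ∑ i, ‖φ i‖ ^ s * W ^ s :=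
          Finset.sum_le_sum fun i _ => sum_rpow_apply_le hs y (φ i)
      _ = W ^ s * X := by rw [hXdef, ← Finset.sum_mul]; ring
  by_cases hsq : s = q
  · subst hsq
    rw [if_pos rfl]
    set M := ⨆ j, ‖τ j‖ with hMdef
    have hM0 : 0 ≤ M := Real.iSup_nonneg fun j => norm_nonneg _
    have hτM : ∀ j, ‖τ j‖ ≤ M :=
      fun j => le_ciSup (f := fun j => ‖τ j‖) (Set.finite_range _).bddAbove j
    have hss : s / s = 1 := div_self hs.ne'
    have hbase : ∑ j, (∑ i, ‖φ i (z j)‖ ^ s) ^ (s / s) ≤ M ^ s * (W ^ s * X) := by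
      rw [hss]
      simp only [Real.rpow_one]
      calc ∑ j, ∑ i, ‖φ i (z j)‖ ^ s = ∑ j, ‖τ j‖ ^ s * ∑ i, ‖φ i (y j)‖ ^ s :=
            Finset.sum_congr rfl fun j _ => hinner j
        _ ≤ ∑ j, M ^ s * ∑ i, ‖φ i (y j)‖ ^ s := Finset.sum_le_sum fun j _ =>
            mul_le_mul_of_nonneg_right
              (Real.rpow_le_rpow (norm_nonneg _) (hτM j) hs.le) (hSnn j)
        _ = M ^ s * ∑ j, ∑ i, ‖φ i (y j)‖ ^ s := by rw [Finset.mul_sum]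
        _ ≤ M ^ s * (W ^ s * X) :=
            mul_le_mul_of_nonneg_left hyb (Real.rpow_nonneg hM0 _)
    have h2 : (∑ j, (∑ i, ‖φ i (z j)‖ ^ s) ^ (s / s)) ^ (1 / s) ≤
        (M ^ s * (W ^ s * X)) ^ (1 / s) :=
      Real.rpow_le_rpow (Finset.sum_nonneg fun j _ => Real.rpow_nonneg
        (Finset.sum_nonneg fun _ _ => Real.rpow_nonneg (norm_nonneg _) _) _)
        hbase (one_div_nonneg.2 hs.le)
    refine h2.trans (le_of_eq ?_)
    rw [Real.mul_rpow (Real.rpow_nonneg hM0 _) (mul_nonneg (Real.rpow_nonneg hW _) hX0),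
        Real.mul_rpow (Real.rpow_nonneg hW _) hX0,
        ← Real.rpow_mul hM0, ← Real.rpow_mul hW, mul_one_div_cancel hs.ne',
        Real.rpow_one, Real.rpow_one]
    ring
  · have hlt : q < s := lt_of_le_of_ne hqs fun h => hsq h.symm
    have ha : 0 < 1 / q - 1 / s := by
      rw [sub_pos]
      exact one_div_lt_one_div_of_lt hq hlt
    rw [if_neg hsq]
    set a := 1 / q - 1 / s with hadef
    set N := (∑ j, ‖τ j‖ ^ a⁻¹) ^ a with hNdef
    have hτsum : (0:ℝ) ≤ ∑ j, ‖τ j‖ ^ a⁻¹ :=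
      Finset.sum_nonneg fun _ _ => Real.rpow_nonneg (norm_nonneg _) _
    have hN0 : 0 ≤ N := Real.rpow_nonneg hτsum _
    -- Hölder exponents
    have hqa : 0 < q * a := mul_pos hq ha
    have hqa1 : q * a < 1 := by
      rw [hadef]
      have : q * (1 / q - 1 / s) = 1 - q / s := by field_simp
      rw [this]
      have : 0 < q / s := div_pos hq hs
      linarith
    have hconj : Real.HolderConjugate (q * a)⁻¹ (s / q) := by
      refine ⟨?_, inv_pos.2 hqa, div_pos hs hq⟩
      rw [inv_inv, inv_one, hadef, inv_div, mul_sub, mul_one_div_cancel hq.ne', mul_one_div]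
      ring
    have holder := Real.inner_le_Lp_mul_Lq (Finset.univ (α := J))
      (fun j => ‖τ j‖ ^ q) (fun j => (∑ i, ‖φ i (y j)‖ ^ s) ^ (q / s)) hconj
    -- simplify the three pieces
    have e1 : ∀ j, |‖τ j‖ ^ q| ^ ((q * a)⁻¹) = ‖τ j‖ ^ a⁻¹ := by
      intro j
      rw [abs_of_nonneg (Real.rpow_nonneg (norm_nonneg _) _), ← Real.rpow_mul (norm_nonneg _)]
      congr 1
      rw [mul_inv]
      field_simp
    have e2 : ∀ j, |(∑ i, ‖φ i (y j)‖ ^ s) ^ (q / s)| ^ (s / q) = ∑ i, ‖φ i (y j)‖ ^ s := by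
      intro j
      rw [abs_of_nonneg (Real.rpow_nonneg (hSnn j) _), ← Real.rpow_mul (hSnn j),
        div_mul_div_comm, mul_comm q s, div_self (by positivity), Real.rpow_one]
    have hLp : (∑ j, |‖τ j‖ ^ q| ^ ((q * a)⁻¹)) ^ (1 / (q * a)⁻¹) = N ^ q := by
      rw [Finset.sum_congr rfl fun j _ => e1 j, hNdef, ← Real.rpow_mul hτsum, one_div, inv_inv]
      congr 1
      ring
    have hLq : (∑ j, |(∑ i, ‖φ i (y j)‖ ^ s) ^ (q / s)| ^ (s / q)) ^ (1 / (s / q)) ≤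
        (W ^ s * X) ^ (q / s) := by
      rw [Finset.sum_congr rfl fun j _ => e2 j, one_div_div]
      exact Real.rpow_le_rpow (Finset.sum_nonneg fun j _ => hSnn j) hyb (by positivity)
    have hbase : ∑ j, (∑ i, ‖φ i (z j)‖ ^ s) ^ (q / s) ≤ N ^ q * (W ^ s * X) ^ (q / s) := by
      have hterm : ∀ j, (∑ i, ‖φ i (z j)‖ ^ s) ^ (q / s) =
          ‖τ j‖ ^ q * (∑ i, ‖φ i (y j)‖ ^ s) ^ (q / s) := by
        intro j
        rw [hinner j, Real.mul_rpow (Real.rpow_nonneg (norm_nonneg _) _) (hSnn j),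
          ← Real.rpow_mul (norm_nonneg _), mul_comm s (q / s), div_mul_cancel₀ q hs.ne']
      calc ∑ j, (∑ i, ‖φ i (z j)‖ ^ s) ^ (q / s)
          = ∑ j, ‖τ j‖ ^ q * (∑ i, ‖φ i (y j)‖ ^ s) ^ (q / s) :=
            Finset.sum_congr rfl fun j _ => hterm j
        _ ≤ (∑ j, |‖τ j‖ ^ q| ^ ((q * a)⁻¹)) ^ (1 / (q * a)⁻¹) *
              (∑ j, |(∑ i, ‖φ i (y j)‖ ^ s) ^ (q / s)| ^ (s / q)) ^ (1 / (s / q)) := holder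
        _ ≤ N ^ q * (W ^ s * X) ^ (q / s) := by
            rw [hLp]
            exact mul_le_mul_of_nonneg_left hLq (Real.rpow_nonneg hN0 _)
    have hbnn : (0:ℝ) ≤ ∑ j, (∑ i, ‖φ i (z j)‖ ^ s) ^ (q / s) :=
      Finset.sum_nonneg fun j _ => Real.rpow_nonneg
        (Finset.sum_nonneg fun _ _ => Real.rpow_nonneg (norm_nonneg _) _) _
    have h2 := Real.rpow_le_rpow hbnn hbase (one_div_nonneg.2 hq.le)
    refine h2.trans (le_of_eq ?_)
    have hWX : (0:ℝ) ≤ W ^ s * X := mul_nonneg (Real.rpow_nonneg hW _) hX0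
    rw [Real.mul_rpow (Real.rpow_nonneg hN0 _) (Real.rpow_nonneg hWX _),
      ← Real.rpow_mul hN0, ← Real.rpow_mul hWX, mul_one_div_cancel hq.ne', Real.rpow_one]
    have : q / s * (1 / q) = 1 / s := by field_simp
    rw [this, Real.mul_rpow (Real.rpow_nonneg hW _) hX0, ← Real.rpow_mul hW,
      mul_one_div_cancel hs.ne', Real.rpow_one, mul_assoc]

end keyupper

section easydir

variable {𝕂 : Type*} [RCLike 𝕂] {F : Type*} [NormedAddCommGroup F] [NormedSpace 𝕂 F]
variable {J : Type*} [Fintype J]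

lemma mixedNorm_mem_nonneg {s q : ℝ} {z : J → F} {c : ℝ}
    (hc : c ∈ { c : ℝ | ∃ τ : J → 𝕂, ∃ y : J → F, (∀ j, z j = τ j • y j) ∧
      c = (if s = q then ⨆ j, ‖τ j‖
           else (∑ j, ‖τ j‖ ^ (1 / q - 1 / s)⁻¹) ^ (1 / q - 1 / s)) * weakLpNorm 𝕂 s y }) :
    0 ≤ c := by
  obtain ⟨τ, y, -, rfl⟩ := hc
  refine mul_nonneg ?_ (weakLpNorm_nonneg_s7 _ _)
  split
  · exact Real.iSup_nonneg fun j => norm_nonneg _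
  · exact Real.rpow_nonneg
      (Finset.sum_nonneg fun _ _ => Real.rpow_nonneg (norm_nonneg _) _) _

lemma mixedNorm_set_nonempty (s q : ℝ) (z : J → F) :
    Set.Nonempty { c : ℝ | ∃ τ : J → 𝕂, ∃ y : J → F, (∀ j, z j = τ j • y j) ∧
      c = (if s = q then ⨆ j, ‖τ j‖
           else (∑ j, ‖τ j‖ ^ (1 / q - 1 / s)⁻¹) ^ (1 / q - 1 / s)) * weakLpNorm 𝕂 s y } :=
  ⟨_, ⟨fun _ => 1, z, fun j => (one_smul _ _).symm, rfl⟩⟩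

lemma mixedNorm_nonneg (s q : ℝ) (z : J → F) : 0 ≤ mixedNorm 𝕂 s q z :=
  Real.sInf_nonneg fun _ hc => mixedNorm_mem_nonneg hc

lemma lhs_le_mixedNorm {s q : ℝ} (hq : 0 < q) (hqs : q ≤ s) (z : J → F)
    (k : ℕ) (φ : Fin k → F →L[𝕂] 𝕂) :
    (∑ j, (∑ i, ‖φ i (z j)‖ ^ s) ^ (q / s)) ^ (1 / q) ≤
      mixedNorm 𝕂 s q z * (∑ i, ‖φ i‖ ^ s) ^ (1 / s) := by
  have hs : 0 < s := hq.trans_le hqs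
  set T := (∑ i, ‖φ i‖ ^ s) ^ (1 / s) with hTdef
  have hT0 : 0 ≤ T := Real.rpow_nonneg
    (Finset.sum_nonneg fun _ _ => Real.rpow_nonneg (norm_nonneg _) _) _
  rcases hT0.eq_or_lt with hT | hT
  · -- T = 0 : use the trivial factorization to see LHS ≤ c₀ * 0 = 0
    have h1 := key_upper hq hqs z z (fun _ => (1:𝕂)) (fun j => (one_smul _ _).symm) k φ
    rw [← hTdef, ← hT, mul_zero] at h1
    rw [← hT, mul_zero]
    exact h1
  · rw [← div_le_iff₀ hT]
    refine le_csInf (mixedNorm_set_nonempty s q z) ?_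
    rintro c ⟨τ, y, hzy, rfl⟩
    rw [div_le_iff₀ hT]
    exact key_upper hq hqs z y τ hzy k φ

end easydir

section convhull

variable {𝕂 : Type*} [RCLike 𝕂] {F : Type*} [NormedAddCommGroup F] [NormedSpace 𝕂 F]
variable {J : Type*} [Fintype J]

lemma convK_bound {s q : ℝ} (hq : 0 < q) (hqs : q ≤ s) (z : J → F) (C : ℝ) (hC : 0 ≤ C)
    (h : ∀ (k : ℕ) (φ : Fin k → F →L[𝕂] 𝕂), (∑ i, ‖φ i‖ ^ s) ≤ 1 →
      (∑ j, (∑ i, ‖φ i (z j)‖ ^ s) ^ (q / s)) ^ (1 / q) ≤ C) :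
    ∀ v ∈ convexHull ℝ (Set.range fun ψ : {ψ : F →L[𝕂] 𝕂 // ‖ψ‖ ≤ 1} =>
        fun j => ‖ψ.1 (z j)‖ ^ s),
      ∑ j, v j ^ (q / s) ≤ C ^ q := by
  have hs : 0 < s := hq.trans_le hqs
  intro v hv
  rw [convexHull_eq] at hv
  obtain ⟨ι, t, w, ζ, hw0, hw1, hζ, hv⟩ := hv
  choose g hg using fun (a : {i // i ∈ t}) => hζ a.1 a.2
  set k := Fintype.card {i // i ∈ t} with hk
  set e := (Fintype.equivFin {i // i ∈ t}).symm with he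
  set φ : Fin k → F →L[𝕂] 𝕂 := fun i => (((w (e i).1 ^ (1 / s) : ℝ)) : 𝕂) • (g (e i)).1
    with hφdef
  have hwnn : ∀ (a : {i // i ∈ t}), 0 ≤ w a.1 := fun a => hw0 a.1 a.2
  have hφn : ∀ i : Fin k, ‖φ i‖ ^ s ≤ w (e i).1 := by
    intro i
    have h1 : ‖φ i‖ = w (e i).1 ^ (1 / s) * ‖(g (e i)).1‖ := by
      rw [hφdef]
      have := norm_smul (((w (e i).1 ^ (1 / s) : ℝ)) : 𝕂) (g (e i)).1
      rw [this, RCLike.norm_ofReal, abs_of_nonneg (Real.rpow_nonneg (hwnn _) _)]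
    rw [h1, Real.mul_rpow (Real.rpow_nonneg (hwnn _) _) (norm_nonneg _),
      rpow_one_div_rpow (hwnn _) hs.ne']
    have : ‖(g (e i)).1‖ ^ s ≤ 1 := Real.rpow_le_one (norm_nonneg _) (g (e i)).2 hs.le
    nlinarith [hwnn (e i), Real.rpow_nonneg (norm_nonneg ((g (e i)).1 : F →L[𝕂] 𝕂)) s]
  have hsum1 : (∑ i, ‖φ i‖ ^ s) ≤ 1 := by
    calc ∑ i, ‖φ i‖ ^ s ≤ ∑ i : Fin k, w (e i).1 := Finset.sum_le_sum fun i _ => hφn i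
      _ = ∑ a : {i // i ∈ t}, w a.1 := Equiv.sum_comp e (fun a => w a.1)
      _ = ∑ i ∈ t, w i := Finset.sum_coe_sort t w
      _ = 1 := hw1
  have happ : ∀ j, ∑ i, ‖φ i (z j)‖ ^ s = v j := by
    intro j
    have hterm : ∀ i : Fin k, ‖φ i (z j)‖ ^ s = w (e i).1 * ζ (e i).1 j := by
      intro i
      have h1 : ‖φ i (z j)‖ = w (e i).1 ^ (1 / s) * ‖(g (e i)).1 (z j)‖ := by
        rw [hφdef]
        simp only [ContinuousLinearMap.smul_apply]
        rw [norm_smul, RCLike.norm_ofReal, abs_of_nonneg (Real.rpow_nonneg (hwnn _) _)]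
      rw [h1, Real.mul_rpow (Real.rpow_nonneg (hwnn _) _) (norm_nonneg _),
        rpow_one_div_rpow (hwnn _) hs.ne']
      congr 1
      exact congrFun (hg (e i)) j
    calc ∑ i, ‖φ i (z j)‖ ^ s = ∑ i : Fin k, w (e i).1 * ζ (e i).1 j :=
          Finset.sum_congr rfl fun i _ => hterm i
      _ = ∑ a : {i // i ∈ t}, w a.1 * ζ a.1 j := Equiv.sum_comp e (fun a => w a.1 * ζ a.1 j)
      _ = ∑ i ∈ t, w i * ζ i j := Finset.sum_coe_sort t (fun i => w i * ζ i j)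
      _ = v j := by
          rw [← hv, Finset.centerMass_eq_of_sum_1 _ _ hw1]
          simp [Finset.sum_apply]
  have hvnn : ∀ j, 0 ≤ v j := by
    intro j
    rw [← happ j]
    exact Finset.sum_nonneg fun _ _ => Real.rpow_nonneg (norm_nonneg _) _
  have h2 := h k φ hsum1
  rw [Finset.sum_congr rfl (fun j _ => by rw [happ j])] at h2
  have h3 := Real.rpow_le_rpow (Real.rpow_nonneg
    (Finset.sum_nonneg fun j _ => Real.rpow_nonneg (hvnn j) _) _) h2 hq.le
  rwa [rpow_one_div_rpow (Finset.sum_nonneg fun j _ => Real.rpow_nonneg (hvnn j) _) hq.ne'] at h3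

end convhull

section construction

open Filter Set Topology

variable {𝕂 : Type*} [RCLike 𝕂] {F : Type*} [NormedAddCommGroup F] [NormedSpace 𝕂 F]
variable {J : Type*} [Fintype J]

lemma construction {s q : ℝ} (hq : 0 < q) (hlt : q < s) (z : J → F) (C : ℝ) (hC : 0 ≤ C)
    (h' : ∀ v ∈ convexHull ℝ (Set.range fun ψ : {ψ : F →L[𝕂] 𝕂 // ‖ψ‖ ≤ 1} =>
        fun j => ‖ψ.1 (z j)‖ ^ s), ∑ j, v j ^ (q / s) ≤ C ^ q)
    {δ : ℝ} (hδ : 0 < δ) :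
    ∃ τ : J → 𝕂, ∃ y : J → F, (∀ j, z j = τ j • y j) ∧
      (∑ j, ‖τ j‖ ^ (1 / q - 1 / s)⁻¹) ^ (1 / q - 1 / s) * weakLpNorm 𝕂 s y ≤
        (C ^ q + (Fintype.card J : ℝ) * δ ^ (q / s)) ^ (1 / q) := by
  have hs : 0 < s := hq.trans hlt
  set r := q / s with hrdef
  have hr0 : 0 < r := div_pos hq hs
  have hr1 : r < 1 := (div_lt_one hs).2 hlt
  set a := 1 / q - 1 / s with hadef
  have ha : 0 < a := by
    rw [hadef, sub_pos]
    exact one_div_lt_one_div_of_lt hq hlt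
  have hsq0 : s - q ≠ 0 := sub_ne_zero.2 hlt.ne'
  have ha' : a = (s - q) / (q * s) := by rw [hadef]; field_simp
  have hainv : a⁻¹ = q * s / (s - q) := by rw [ha', inv_div]
  have hE1 : (r - 1) * (-(a⁻¹ / s)) = r := by
    rw [hrdef, hainv]; field_simp; ring
  have hE2 : a + 1 / s = 1 / q := by rw [hadef]; ring
  -- the convex compact set
  set K := Set.range (fun ψ : {ψ : F →L[𝕂] 𝕂 // ‖ψ‖ ≤ 1} => fun j => ‖ψ.1 (z j)‖ ^ s)
    with hKdef
  set Cv := closure (convexHull ℝ K) with hCvdef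
  set box := Set.pi Set.univ (fun j : J => Set.Icc (0:ℝ) (‖z j‖ ^ s)) with hboxdef
  have hKbox : K ⊆ box := by
    rintro _ ⟨ψ, rfl⟩ j _
    exact ⟨Real.rpow_nonneg (norm_nonneg _) _,
      Real.rpow_le_rpow (norm_nonneg _)
        ((ψ.1.le_opNorm (z j)).trans (mul_le_of_le_one_left (norm_nonneg _) ψ.2)) hs.le⟩
  have hboxconv : Convex ℝ box := convex_pi fun j _ => convex_Icc _ _
  have hboxclosed : IsClosed box := isClosed_set_pi fun j _ => isClosed_Icc
  have hboxcpt : IsCompact box := isCompact_univ_pi fun j => isCompact_Icc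
  have hCvbox : Cv ⊆ box := closure_minimal (convexHull_min hKbox hboxconv) hboxclosed
  have hCvcpt : IsCompact Cv := hboxcpt.of_isClosed_subset isClosed_closure hCvbox
  have hKCv : K ⊆ Cv := (subset_convexHull ℝ K).trans subset_closure
  have hCvne : Cv.Nonempty := ⟨_, hKCv (Set.mem_range_self ⟨(0 : F →L[𝕂] 𝕂), by simp⟩)⟩
  have hCv0 : ∀ v ∈ Cv, ∀ j, 0 ≤ v j := fun v hv j => (hCvbox hv j trivial).1
  have hCvconv : Convex ℝ Cv := (convex_convexHull ℝ K).closure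
  -- continuity facts
  have hrc : Continuous fun x : ℝ => x ^ r :=
    continuous_iff_continuousAt.2 fun x => Real.continuousAt_rpow_const x r (Or.inr hr0.le)
  have hFcont : Continuous fun v : J → ℝ => ∑ j, v j ^ r :=
    continuous_finset_sum _ fun j _ => hrc.comp (continuous_apply j)
  have hCvF : ∀ v ∈ Cv, ∑ j, v j ^ r ≤ C ^ q := by
    have hclosed : IsClosed {v : J → ℝ | ∑ j, v j ^ r ≤ C ^ q} :=
      isClosed_le hFcont continuous_const
    exact fun v hv => closure_minimal (fun u hu => h' u hu) hclosed hv
  -- the maximizer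
  set g : (J → ℝ) → ℝ := fun v => ∑ j, (v j + δ) ^ r with hgdef
  have hgcont : Continuous g :=
    continuous_finset_sum _ fun j _ => hrc.comp ((continuous_apply j).add continuous_const)
  obtain ⟨vs, hvsCv, hmax⟩ := hCvcpt.exists_isMaxOn hCvne hgcont.continuousOn
  have hvδ : ∀ j, 0 < vs j + δ := fun j => add_pos_of_nonneg_of_pos (hCv0 _ hvsCv j) hδ
  set u : J → ℝ := fun j => r * (vs j + δ) ^ (r - 1) with hudef
  have hu0 : ∀ j, 0 < u j := fun j => mul_pos hr0 (Real.rpow_pos_of_pos (hvδ j) _)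
  set G := g vs with hGdef
  have hG0 : 0 ≤ G := Finset.sum_nonneg fun j _ => Real.rpow_nonneg (hvδ j).le _
  have hGle : G ≤ C ^ q + (Fintype.card J : ℝ) * δ ^ r := by
    have h1 : G ≤ ∑ j, (vs j ^ r + δ ^ r) :=
      Finset.sum_le_sum fun j _ => real_rpow_add_le (hCv0 _ hvsCv j) hδ.le hr0.le hr1.le
    rw [Finset.sum_add_distrib, Finset.sum_const, Finset.card_univ, nsmul_eq_mul] at h1
    exact h1.trans (add_le_add_left (hCvF vs hvsCv) _)
  -- first order condition
  have hvstar_u : ∑ j, vs j * u j ≤ r * G := by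
    rw [hGdef, hgdef, Finset.mul_sum]
    refine Finset.sum_le_sum fun j _ => ?_
    have hx := (hvδ j).ne'
    have key : (vs j + δ) * u j = r * (vs j + δ) ^ r := by
      show (vs j + δ) * (r * (vs j + δ) ^ (r - 1)) = r * (vs j + δ) ^ r
      rw [Real.rpow_sub_one hx]
      field_simp
    calc vs j * u j ≤ (vs j + δ) * u j :=
          mul_le_mul_of_nonneg_right (by linarith) (hu0 j).le
      _ = r * (vs j + δ) ^ r := key
  have hfoc : ∀ v ∈ Cv, ∑ j, v j * u j ≤ r * G := by
    intro v hv
    set d : J → ℝ := fun j => v j - vs j with hddef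
    set h : ℝ → ℝ := fun θ => ∑ j, (vs j + θ * d j + δ) ^ r with hhdef
    have hj : ∀ j : J, HasDerivAt (fun θ => (vs j + θ * d j + δ) ^ r) (d j * u j) 0 := by
      intro j
      have h1 : HasDerivAt (fun θ : ℝ => vs j + θ * d j + δ) (d j) 0 :=
        ((hasDerivAt_mul_const (d j)).const_add (vs j)).add_const δ
      have h2 := h1.rpow_const (p := r) (Or.inl (by simpa using (hvδ j).ne'))
      have h3 : vs j + 0 * d j + δ = vs j + δ := by ring
      rw [h3] at h2
      convert h2 using 1
      show d j * (r * (vs j + δ) ^ (r - 1)) = d j * r * (vs j + δ) ^ (r - 1)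
      ring
    have hD : HasDerivAt h (∑ j, d j * u j) 0 := HasDerivAt.fun_sum fun j _ => hj j
    have hle : ∀ θ ∈ Set.Ioc (0:ℝ) 1, h θ ≤ h 0 := by
      intro θ hθ
      have hmem : (1 - θ) • vs + θ • v ∈ Cv :=
        hCvconv hvsCv hv (by linarith [hθ.2]) hθ.1.le (by ring)
      have e0 : h 0 = g vs := by
        rw [hhdef, hgdef]
        exact Finset.sum_congr rfl fun j _ => by ring_nf
      have eθ : h θ = g ((1 - θ) • vs + θ • v) := by
        rw [hhdef, hgdef]
        refine Finset.sum_congr rfl fun j _ => ?_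
        have : ((1 - θ) • vs + θ • v) j = vs j + θ * d j := by
          simp [hddef, Pi.smul_apply, smul_eq_mul]
          ring
        rw [this]
      rw [e0, eθ]
      exact hmax hmem
    have hL : (∑ j, d j * u j) ≤ 0 := by
      rw [hasDerivAt_iff_tendsto_slope] at hD
      have h2 : Tendsto (slope h 0) (𝓝[>] (0:ℝ)) (𝓝 (∑ j, d j * u j)) :=
        hD.mono_left (nhdsWithin_mono 0 (fun x hx => Set.mem_compl_singleton_iff.2
          (ne_of_gt hx)))
      refine le_of_tendsto h2 ?_
      filter_upwards [Ioc_mem_nhdsGT_of_mem (Set.left_mem_Ico.2 zero_lt_one)] with θ hθ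
      rw [slope_def_field]
      rw [sub_zero]
      exact div_nonpos_of_nonpos_of_nonneg (by linarith [hle θ hθ]) hθ.1.le
    have hsplit : ∑ j, v j * u j = ∑ j, d j * u j + ∑ j, vs j * u j := by
      rw [← Finset.sum_add_distrib]
      exact Finset.sum_congr rfl fun j _ => by rw [hddef]; ring
    linarith
  -- the factorization
  set t : J → ℝ := fun j => u j ^ (-(1 / s)) with htdef
  have ht0 : ∀ j, 0 < t j := fun j => Real.rpow_pos_of_pos (hu0 j) _
  refine ⟨fun j => ((t j : ℝ) : 𝕂), fun j => (((t j)⁻¹ : ℝ) : 𝕂) • z j, ?_, ?_⟩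
  · intro j
    rw [smul_smul, ← RCLike.ofReal_mul, mul_inv_cancel₀ (ht0 j).ne', RCLike.ofReal_one, one_smul]
  · have hτnorm : ∀ j, ‖((t j : ℝ) : 𝕂)‖ = t j := by
      intro j; rw [RCLike.norm_ofReal, abs_of_pos (ht0 j)]
    have htinv : ∀ j, (t j)⁻¹ = u j ^ (1 / s) := by
      intro j
      show (u j ^ (-(1 / s)))⁻¹ = u j ^ (1 / s)
      rw [Real.rpow_neg (hu0 j).le, inv_inv]
    have htinvs : ∀ j, ((t j)⁻¹) ^ s = u j := by
      intro j
      rw [htinv j, rpow_one_div_rpow (hu0 j).le hs.ne']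
    -- weak norm bound
    have hWy : weakLpNorm 𝕂 s (fun j => (((t j)⁻¹ : ℝ) : 𝕂) • z j) ≤ (r * G) ^ (1 / s) := by
      haveI : Nonempty {φ : F →L[𝕂] 𝕂 // ‖φ‖ ≤ 1} := ⟨⟨0, by simp⟩⟩
      refine ciSup_le fun ψ => ?_
      have hterm : ∀ j, ‖ψ.1 ((((t j)⁻¹ : ℝ) : 𝕂) • z j)‖ ^ s = ‖ψ.1 (z j)‖ ^ s * u j := by
        intro j
        have h1 : ψ.1 ((((t j)⁻¹ : ℝ) : 𝕂) • z j) = (((t j)⁻¹ : ℝ) : 𝕂) * ψ.1 (z j) := by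
          rw [map_smul, smul_eq_mul]
        rw [h1, norm_mul, RCLike.norm_ofReal, abs_of_pos (inv_pos.2 (ht0 j)),
          Real.mul_rpow (inv_pos.2 (ht0 j)).le (norm_nonneg _), htinvs j, mul_comm]
      have hsum : ∑ j, ‖ψ.1 ((((t j)⁻¹ : ℝ) : 𝕂) • z j)‖ ^ s ≤ r * G := by
        rw [Finset.sum_congr rfl fun j _ => hterm j]
        exact hfoc _ (hKCv (Set.mem_range_self ψ))
      have := Real.rpow_le_rpow (Finset.sum_nonneg fun j _ =>
        Real.rpow_nonneg (norm_nonneg _) _) hsum (one_div_nonneg.2 hs.le)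
      exact this
    -- ℓ^ρ part
    have hstep1 : ∀ j, ‖((t j : ℝ) : 𝕂)‖ ^ a⁻¹ = r ^ (-(a⁻¹ / s)) * (vs j + δ) ^ r := by
      intro j
      rw [hτnorm j, htdef, ← Real.rpow_mul (hu0 j).le]
      have he : -(1 / s) * a⁻¹ = -(a⁻¹ / s) := by ring
      rw [he, hudef, Real.mul_rpow hr0.le (Real.rpow_nonneg (hvδ j).le _),
        ← Real.rpow_mul (hvδ j).le, hE1]
    have hsumτ : ∑ j, ‖((t j : ℝ) : 𝕂)‖ ^ a⁻¹ = r ^ (-(a⁻¹ / s)) * G := by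
      rw [hGdef, hgdef, Finset.mul_sum]
      exact Finset.sum_congr rfl fun j _ => hstep1 j
    have hNval : (∑ j, ‖((t j : ℝ) : 𝕂)‖ ^ a⁻¹) ^ a = r ^ (-(1 / s)) * G ^ a := by
      rw [hsumτ, Real.mul_rpow (Real.rpow_nonneg hr0.le _) hG0, ← Real.rpow_mul hr0.le]
      congr 2
      field_simp
    calc (∑ j, ‖((t j : ℝ) : 𝕂)‖ ^ a⁻¹) ^ a *
          weakLpNorm 𝕂 s (fun j => (((t j)⁻¹ : ℝ) : 𝕂) • z j)
        ≤ (r ^ (-(1 / s)) * G ^ a) * (r * G) ^ (1 / s) := by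
          rw [hNval]
          exact mul_le_mul_of_nonneg_left hWy
            (mul_nonneg (Real.rpow_nonneg hr0.le _) (Real.rpow_nonneg hG0 _))
      _ = G ^ (1 / q) := by
          rw [Real.mul_rpow hr0.le hG0]
          have e1 : r ^ (-(1 / s)) * G ^ a * (r ^ (1 / s) * G ^ (1 / s)) =
              (r ^ (-(1 / s)) * r ^ (1 / s)) * (G ^ a * G ^ (1 / s)) := by ring
          rw [e1, ← Real.rpow_add hr0, neg_add_cancel, Real.rpow_zero, one_mul,
            ← Real.rpow_add' hG0 (by rw [hE2]; positivity), hE2]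
      _ ≤ (C ^ q + (Fintype.card J : ℝ) * δ ^ r) ^ (1 / q) :=
          Real.rpow_le_rpow hG0 hGle (one_div_nonneg.2 hq.le)

end construction

section harddir

variable {𝕂 : Type*} [RCLike 𝕂] {F : Type*} [NormedAddCommGroup F] [NormedSpace 𝕂 F]
variable {J : Type*} [Fintype J]

lemma mixedNorm_le_of_forall {s q : ℝ} (hq : 0 < q) (hqs : q ≤ s) (z : J → F) (C : ℝ)
    (hC : 0 ≤ C)
    (h : ∀ (k : ℕ) (φ : Fin k → F →L[𝕂] 𝕂), (∑ i, ‖φ i‖ ^ s) ≤ 1 →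
      (∑ j, (∑ i, ‖φ i (z j)‖ ^ s) ^ (q / s)) ^ (1 / q) ≤ C) :
    mixedNorm 𝕂 s q z ≤ C := by
  have hs : 0 < s := hq.trans_le hqs
  have hbdd : BddBelow { c : ℝ | ∃ τ : J → 𝕂, ∃ y : J → F, (∀ j, z j = τ j • y j) ∧
      c = (if s = q then ⨆ j, ‖τ j‖
           else (∑ j, ‖τ j‖ ^ (1 / q - 1 / s)⁻¹) ^ (1 / q - 1 / s)) * weakLpNorm 𝕂 s y } :=
    ⟨0, fun c hc => mixedNorm_mem_nonneg hc⟩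
  by_cases hsq : s = q
  · subst hsq
    -- use the trivial factorization
    have hmem : (⨆ _ : J, ‖(1:𝕂)‖) * weakLpNorm 𝕂 s z ∈
        { c : ℝ | ∃ τ : J → 𝕂, ∃ y : J → F, (∀ j, z j = τ j • y j) ∧
          c = (if s = s then ⨆ j, ‖τ j‖
               else (∑ j, ‖τ j‖ ^ (1 / s - 1 / s)⁻¹) ^ (1 / s - 1 / s)) * weakLpNorm 𝕂 s y } := by
      refine ⟨fun _ => 1, z, fun j => (one_smul _ _).symm, ?_⟩
      rw [if_pos rfl]
    refine (csInf_le hbdd hmem).trans ?_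
    have hW : weakLpNorm 𝕂 s z ≤ C := by
      haveI : Nonempty {φ : F →L[𝕂] 𝕂 // ‖φ‖ ≤ 1} := ⟨⟨0, by simp⟩⟩
      refine ciSup_le fun ψ => ?_
      have h1 := h 1 (fun _ => ψ.1) ?_
      · have e1 : ∀ j, (∑ i : Fin 1, ‖ψ.1 (z j)‖ ^ s) ^ (s / s) = ‖ψ.1 (z j)‖ ^ s := by
          intro j
          rw [Fin.sum_univ_one, div_self hs.ne', Real.rpow_one]
        rwa [Finset.sum_congr rfl fun j _ => e1 j] at h1
      · rw [Fin.sum_univ_one]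
        exact Real.rpow_le_one (norm_nonneg _) ψ.2 hs.le
    rcases isEmpty_or_nonempty J with hJ | hJ
    · rw [iSup_of_empty']
      have : sSup (∅ : Set ℝ) = 0 := Real.sSup_empty
      rw [this, zero_mul]
      exact hC
    · rw [ciSup_const, norm_one, one_mul]
      exact hW
  · have hlt : q < s := lt_of_le_of_ne hqs fun h' => hsq h'.symm
    have key : ∀ ε > (0:ℝ), mixedNorm 𝕂 s q z ≤ C + ε := by
      intro ε hε
      have hr0 : 0 < q / s := div_pos hq hs
      have hCε : C ^ q < (C + ε) ^ q :=
        Real.rpow_lt_rpow hC (lt_add_of_pos_right C hε) hq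
      set γ := (C + ε) ^ q - C ^ q with hγdef
      have hγ : 0 < γ := by simp [hγdef, hCε]
      set N := (Fintype.card J : ℝ) with hNdef
      have hN : 0 ≤ N := Nat.cast_nonneg _
      set δ := (γ / (N + 1)) ^ (1 / (q / s)) with hδdef
      have hδ : 0 < δ := Real.rpow_pos_of_pos (div_pos hγ (by linarith)) _
      have hδr : δ ^ (q / s) = γ / (N + 1) := by
        rw [hδdef, rpow_one_div_rpow (div_pos hγ (by linarith)).le hr0.ne']
      have hNδ : N * δ ^ (q / s) ≤ γ := by
        rw [hδr]
        rw [div_eq_mul_inv, ← mul_assoc]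
        have h1 : N * γ * (N + 1)⁻¹ ≤ γ := by
          rw [mul_inv_le_iff₀ (by linarith)]
          nlinarith
        exact h1
      obtain ⟨τ, y, hzy, hcost⟩ := construction hq hlt z C hC
        (convK_bound hq hqs z C hC h) hδ
      have hmem : (∑ j, ‖τ j‖ ^ (1 / q - 1 / s)⁻¹) ^ (1 / q - 1 / s) * weakLpNorm 𝕂 s y ∈
          { c : ℝ | ∃ τ : J → 𝕂, ∃ y : J → F, (∀ j, z j = τ j • y j) ∧
            c = (if s = q then ⨆ j, ‖τ j‖
                 else (∑ j, ‖τ j‖ ^ (1 / q - 1 / s)⁻¹) ^ (1 / q - 1 / s)) * weakLpNorm 𝕂 s y } := by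
        refine ⟨τ, y, hzy, ?_⟩
        rw [if_neg hsq]
      refine (csInf_le hbdd hmem).trans (hcost.trans ?_)
      have h2 : C ^ q + N * δ ^ (q / s) ≤ (C + ε) ^ q := by
        rw [hγdef] at hNδ
        linarith
      have h3 := Real.rpow_le_rpow (by positivity) h2 (one_div_nonneg.2 hq.le)
      rwa [← Real.rpow_mul (by linarith : (0:ℝ) ≤ C + ε), mul_one_div, div_self hq.ne',
        Real.rpow_one] at h3
    by_contra hcon
    push_neg at hcon
    have := key ((mixedNorm 𝕂 s q z - C) / 2) (by linarith)
    linarith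

end harddir


/-- `A` is multiple `(s,q;p₁,…,pₙ)`-mixing summing. -/
def MultipleMixingSumming (𝕂 : Type*) [RCLike 𝕂] {n : ℕ} {E : Fin n → Type*}
    [∀ i, NormedAddCommGroup (E i)] [∀ i, NormedSpace 𝕂 (E i)]
    {F : Type*} [NormedAddCommGroup F] [NormedSpace 𝕂 F]
    (s q : ℝ) (p : Fin n → ℝ) (A : ((i : Fin n) → E i) → F) : Prop :=
  ∃ σ : ℝ, 0 ≤ σ ∧ ∀ (m : ℕ) (x : (i : Fin n) → Fin m → E i),
    mixedNorm 𝕂 s q (fun j : Fin n → Fin m => A (fun i => x i (j i))) ≤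
      σ * ∏ i, weakLpNorm 𝕂 (p i) (x i)

/-- The multiple `(s,q;p₁,…,pₙ)`-mixing summing norm of `A`. -/
def mixingNorm (𝕂 : Type*) [RCLike 𝕂] {n : ℕ} {E : Fin n → Type*}
    [∀ i, NormedAddCommGroup (E i)] [∀ i, NormedSpace 𝕂 (E i)]
    {F : Type*} [NormedAddCommGroup F] [NormedSpace 𝕂 F]
    (s q : ℝ) (p : Fin n → ℝ) (A : ((i : Fin n) → E i) → F) : ℝ :=
  sInf { σ : ℝ | 0 ≤ σ ∧ ∀ (m : ℕ) (x : (i : Fin n) → Fin m → E i),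
    mixedNorm 𝕂 s q (fun j : Fin n → Fin m => A (fun i => x i (j i))) ≤
      σ * ∏ i, weakLpNorm 𝕂 (p i) (x i) }

/-- Theorem `criterio`: characterization of multiple
`(s,q;p₁,…,pₙ)`-mixing summing operators by an inequality, together with the
identification of the mixing norm as the infimum of the admissible constants. -/
theorem multipleMixingSumming_iff_inequality
    {𝕂 : Type*} [RCLike 𝕂] {n : ℕ} (hn : 1 ≤ n)
    (s q : ℝ) (p : Fin n → ℝ) (hp : ∀ l, 0 < p l) (hpq : ∀ l, p l ≤ q) (hqs : q ≤ s)
    (E : Fin n → Type*) [∀ i, NormedAddCommGroup (E i)] [∀ i, NormedSpace 𝕂 (E i)]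
    [∀ i, CompleteSpace (E i)]
    (F : Type*) [NormedAddCommGroup F] [NormedSpace 𝕂 F] [CompleteSpace F]
    (A : ContinuousMultilinearMap 𝕂 E F) :
    (MultipleMixingSumming 𝕂 s q p (⇑A) ↔
      ∃ σ : ℝ, 0 ≤ σ ∧ ∀ (k m : ℕ) (x : (l : Fin n) → Fin m → E l)
          (φ : Fin k → (F →L[𝕂] 𝕂)),
        (∑ j : Fin n → Fin m,
            (∑ i : Fin k, ‖φ i (A (fun l => x l (j l)))‖ ^ s) ^ (q / s)) ^ (1 / q) ≤
          σ * (∏ l, weakLpNorm 𝕂 (p l) (x l)) * (∑ i : Fin k, ‖φ i‖ ^ s) ^ (1 / s)) ∧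
    mixingNorm 𝕂 s q p (⇑A) =
      sInf { σ : ℝ | 0 ≤ σ ∧ ∀ (k m : ℕ) (x : (l : Fin n) → Fin m → E l)
          (φ : Fin k → (F →L[𝕂] 𝕂)),
        (∑ j : Fin n → Fin m,
            (∑ i : Fin k, ‖φ i (A (fun l => x l (j l)))‖ ^ s) ^ (q / s)) ^ (1 / q) ≤
          σ * (∏ l, weakLpNorm 𝕂 (p l) (x l)) * (∑ i : Fin k, ‖φ i‖ ^ s) ^ (1 / s) } := by
  have hq : 0 < q := lt_of_lt_of_le (hp ⟨0, hn⟩) (hpq ⟨0, hn⟩)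
  have key : ∀ σ : ℝ, 0 ≤ σ →
      ((∀ (m : ℕ) (x : (i : Fin n) → Fin m → E i),
        mixedNorm 𝕂 s q (fun j : Fin n → Fin m => A (fun i => x i (j i))) ≤
          σ * ∏ i, weakLpNorm 𝕂 (p i) (x i)) ↔
       (∀ (k m : ℕ) (x : (l : Fin n) → Fin m → E l) (φ : Fin k → (F →L[𝕂] 𝕂)),
        (∑ j : Fin n → Fin m,
            (∑ i : Fin k, ‖φ i (A (fun l => x l (j l)))‖ ^ s) ^ (q / s)) ^ (1 / q) ≤
          σ * (∏ l, weakLpNorm 𝕂 (p l) (x l)) * (∑ i : Fin k, ‖φ i‖ ^ s) ^ (1 / s))) := by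
    intro σ hσ
    constructor
    · intro hP k m x φ
      have h1 := lhs_le_mixedNorm hq hqs
        (fun j : Fin n → Fin m => A (fun l => x l (j l))) k φ
      have hT : (0:ℝ) ≤ (∑ i : Fin k, ‖φ i‖ ^ s) ^ (1 / s) :=
        Real.rpow_nonneg (Finset.sum_nonneg fun _ _ => Real.rpow_nonneg (norm_nonneg _) _) _
      exact h1.trans (mul_le_mul_of_nonneg_right (hP m x) hT)
    · intro hQ m x
      have hprodnn : (0:ℝ) ≤ ∏ l, weakLpNorm 𝕂 (p l) (x l) :=
        Finset.prod_nonneg fun l _ => weakLpNorm_nonneg_s7 _ _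
      refine mixedNorm_le_of_forall hq hqs _ _ (mul_nonneg hσ hprodnn) ?_
      intro k φ hφ1
      have h2 := hQ k m x φ
      have hT1 : (∑ i : Fin k, ‖φ i‖ ^ s) ^ (1 / s) ≤ 1 :=
        Real.rpow_le_one (Finset.sum_nonneg fun _ _ => Real.rpow_nonneg (norm_nonneg _) _)
          hφ1 (one_div_nonneg.2 (hq.trans_le hqs).le)
      refine h2.trans ?_
      calc σ * (∏ l, weakLpNorm 𝕂 (p l) (x l)) * (∑ i : Fin k, ‖φ i‖ ^ s) ^ (1 / s)
          ≤ σ * (∏ l, weakLpNorm 𝕂 (p l) (x l)) * 1 :=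
            mul_le_mul_of_nonneg_left hT1 (mul_nonneg hσ hprodnn)
        _ = σ * ∏ l, weakLpNorm 𝕂 (p l) (x l) := mul_one _
  constructor
  · exact exists_congr fun σ => and_congr_right fun hσ => key σ hσ
  · show sInf _ = sInf _
    exact congrArg sInf (Set.ext fun σ => and_congr_right fun hσ => key σ hσ)
end
end
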